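/- Let G be a simplicial group, α = (i_l,…,i_1), β = (j_m,…,j_1) ∈ S(n) with α ∩ β = ∅ and β < α, and x ∈ NG_{n−#α}, y ∈ NG_{n−#β}. Set v = [s_α x, s_β y]. Then for every k with k > i_l + 1 and k > j_m + 1, one has p_k(v) = v, where p_k(z) = z·s_k d_k(z)^{-1}. -/

import Mathlib

/-- A simplicial group: groups `G n` with face maps `d n i : G (n+1) →* G n`
and degeneracies `s n i : G n →* G (n+1)` satisfying the simplicial identities
(asserted in the meaningful index ranges). -/
structure SGrp where
  G : ℕ → Type
  grp : ∀ n, Group (G n)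
  d : (n : ℕ) → ℕ → (G (n+1) →* G n)
  s : (n : ℕ) → ℕ → (G n →* G (n+1))
  dd : ∀ n i j, i < j → j ≤ n + 2 → ∀ x,
    d n i (d (n+1) j x) = d n (j-1) (d (n+1) i x)
  ds_lt : ∀ n i j, i < j → j ≤ n + 1 → ∀ x,
    d (n+1) i (s (n+1) j x) = s n (j-1) (d n i x)
  ds_eq : ∀ n j, j ≤ n → ∀ x, d n j (s n j x) = x
  ds_succ : ∀ n j, j ≤ n → ∀ x, d n (j+1) (s n j x) = x
  ds_gt : ∀ n i j, j + 1 < i → i ≤ n + 2 → ∀ x,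
    d (n+1) i (s (n+1) j x) = s n j (d n (i-1) x)
  ss : ∀ n i j, i ≤ j → j ≤ n → ∀ x,
    s (n+1) i (s n j x) = s (n+1) (j+1) (s n i x)

attribute [instance] SGrp.grp

/-- Moore complex: `NG 0 = G 0`, `NG (n+1) = ⋂_{i ≤ n} ker (d_i)`. -/
def SGrp.NG (X : SGrp) : (n : ℕ) → Subgroup (X.G n)
  | 0 => ⊤
  | (n+1) => ⨅ i ∈ Finset.range (n+1), (X.d n i).ker

/-- Transport along an equality of dimensions. -/
def SGrp.castHom (X : SGrp) {a b : ℕ} (h : a = b) : X.G a →* X.G b where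
  toFun x := h ▸ x
  map_one' := by subst h; rfl
  map_mul' x y := by subst h; rfl

/-- Composite degeneracy `s_α = s_{i_l} ⋯ s_{i_1}` for `α = [i_l, …, i_1]`
(head applied last). -/
def SGrp.sComp (X : SGrp) : (m : ℕ) → (α : List ℕ) → (X.G m →* X.G (m + α.length))
  | _, [] => MonoidHom.id _
  | m, i :: rest => (X.s (m + rest.length) i).comp (X.sComp m rest)

/-- `s_α : G_{n-#α} →* G_n` for `α ∈ S(n)` (the trivial hom if lengths mismatch). -/
def SGrp.sMapN (X : SGrp) (n : ℕ) (α : List ℕ) : X.G (n - α.length) →* X.G n :=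
  if h : n - α.length + α.length = n then
    (X.castHom h).comp (X.sComp (n - α.length) α) else 1

/-- `p_j(z) = z ⬝ (s_j d_j z)⁻¹` on `G (n+1)`. -/
def SGrp.p (X : SGrp) (n j : ℕ) (z : X.G (n+1)) : X.G (n+1) :=
  z * (X.s n j (X.d n j z))⁻¹

/-- `pComp n j = p_j ∘ ⋯ ∘ p_0` on `G (n+1)`. -/
def SGrp.pComp (X : SGrp) (n : ℕ) : ℕ → X.G (n+1) → X.G (n+1)
  | 0 => X.p n 0
  | (j+1) => fun z => X.p n (j+1) (X.pComp n j z)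

/-- `pComp1 n l = p_l ∘ ⋯ ∘ p_1` on `G (n+1)` (identity for `l = 0`). -/
def SGrp.pComp1 (X : SGrp) (n : ℕ) : ℕ → X.G (n+1) → X.G (n+1)
  | 0 => id
  | (j+1) => fun z => X.p n (j+1) (X.pComp1 n j z)

/-- The ordering of `S(n)` from the paper: `α < β` iff comparing from the
smallest indices (the reversed lists), either the first difference has the
index of `α` larger, or `α`'s indices (from the small end) form a proper
prefix of `β`'s. -/
def Slt (α β : List ℕ) : Prop := List.Lex (· > ·) α.reverse β.reverse

/-- `α` represents a nonidentity element of `S(N)`: a nonempty strictly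
decreasing tuple of indices `< N`. -/
def SIdx (N : ℕ) (α : List ℕ) : Prop :=
  α ≠ [] ∧ α.Chain' (· > ·) ∧ α.length ≤ N ∧ ∀ i ∈ α, i < N

lemma SGrp.castHom_rfl (X : SGrp) {a : ℕ} (h : a = a) (x : X.G a) :
    X.castHom h x = x := rfl

lemma SGrp.castHom_castHom (X : SGrp) {a b c : ℕ} (h1 : a = b) (h2 : b = c) (x : X.G a) :
    X.castHom h2 (X.castHom h1 x) = X.castHom (h1.trans h2) x := by
  subst h1; subst h2; rfl

lemma SGrp.d_castHom (X : SGrp) {a b : ℕ} (h : a = b) (h' : a + 1 = b + 1) (i : ℕ)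
    (x : X.G (a+1)) :
    X.d b i (X.castHom h' x) = X.castHom h (X.d a i x) := by
  subst h; rfl

lemma SGrp.s_castHom (X : SGrp) {a b : ℕ} (h : a = b) (h' : a + 1 = b + 1) (i : ℕ)
    (x : X.G a) :
    X.s b i (X.castHom h x) = X.castHom h' (X.s a i x) := by
  subst h; rfl

lemma SGrp.sComp_castHom (X : SGrp) {a b : ℕ} (h : a = b) (α : List ℕ)
    (h' : a + α.length = b + α.length) (x : X.G a) :
    X.sComp b α (X.castHom h x) = X.castHom h' (X.sComp a α x) := by
  subst h; rfl

lemma SGrp.mem_NG_castHom (X : SGrp) {a b : ℕ} (h : a = b) (x : X.G a)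
    (hx : x ∈ X.NG a) : X.castHom h x ∈ X.NG b := by
  subst h; exact hx

lemma chain'_length_le (α : List ℕ) (hc : α.Chain' (· > ·)) (c : ℕ)
    (h : ∀ i ∈ α, i < c) : α.length ≤ c := by
  classical
  have hp : α.Pairwise (· > ·) := List.isChain_iff_pairwise.mp hc
  have hnd : α.Nodup := hp.imp (fun h => (ne_of_gt h))
  have hcard : α.toFinset.card = α.length := List.toFinset_card_of_nodup hnd
  have hsub : α.toFinset ⊆ Finset.range c := fun i hi =>
    Finset.mem_range.mpr (h i (List.mem_toFinset.mp hi))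
  calc α.length = α.toFinset.card := hcard.symm
    _ ≤ (Finset.range c).card := Finset.card_le_card hsub
    _ = c := Finset.card_range c

lemma SGrp.d_sComp (X : SGrp) (α : List ℕ) (m k : ℕ) :
    α.Chain' (· > ·) → (∀ i ∈ α, i + 1 < k + α.length) → k ≤ m + 1 →
    ∀ (x : X.G (m+1)) (h : m + 1 + α.length = m + α.length + 1),
    X.d (m + α.length) (k + α.length) (X.castHom h (X.sComp (m+1) α x)) =
      X.sComp m α (X.d m k x) := by
  induction α with
  | nil => intro _ _ _ x h; rfl
  | cons i rest ih =>
    intro hc hk hkm x h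
    have hp : (i :: rest).Pairwise (· > ·) := List.isChain_iff_pairwise.mp hc
    have h2 : i + 1 < k + (rest.length + 1) := by
      have := hk i List.mem_cons_self; simpa using this
    have hks : ∀ j ∈ rest, j + 1 < k + rest.length := by
      intro j hj
      have h1 : i > j := (List.pairwise_cons.mp hp).1 j hj
      omega
    show X.d (m + (rest.length+1)) (k + (rest.length+1))
        (X.castHom h (X.s (m+1+rest.length) i (X.sComp (m+1) rest x))) =
      X.s (m + rest.length) i (X.sComp m rest (X.d m k x))
    have e : X.castHom h (X.s (m+1+rest.length) i (X.sComp (m+1) rest x))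
        = X.s (m+rest.length+1) i
            (X.castHom (show m+1+rest.length = m+rest.length+1 by omega)
              (X.sComp (m+1) rest x)) :=
      (X.s_castHom (show m+1+rest.length = m+rest.length+1 by omega) h i _).symm
    refine Eq.trans (congrArg (X.d _ _) e) ?_
    refine Eq.trans (X.ds_gt (m+rest.length) (k+(rest.length+1)) i (by omega) (by omega) _) ?_
    exact congrArg (X.s (m+rest.length) i) (ih hc.tail hks hkm x (by omega))

lemma SGrp.d_sMapN_eq_one (X : SGrp) (α : List ℕ) (hc : α.Chain' (· > ·)) (n k : ℕ)
    (hk : ∀ i ∈ α, i + 1 < k) (hkn : k ≤ n) (hLk : α.length ≤ k - 1) (hk1 : 1 ≤ k)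
    (x : X.G (n + 1 - α.length)) (hx : x ∈ X.NG (n + 1 - α.length)) :
    X.d n k (X.sMapN (n+1) α x) = 1 := by
  have hLn : α.length ≤ n := by omega
  have hL : n + 1 - α.length + α.length = n + 1 := by omega
  rw [SGrp.sMapN, dif_pos hL, MonoidHom.comp_apply]
  have hm1 : n + 1 - α.length = (n - α.length) + 1 := by omega
  have e1 := X.sComp_castHom hm1 α
    (show n+1-α.length+α.length = (n-α.length)+1+α.length by omega) x
  have e2 : X.castHom hL (X.sComp (n+1-α.length) α x)
      = X.castHom (show (n-α.length)+1+α.length = n+1 by omega)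
          (X.sComp ((n-α.length)+1) α (X.castHom hm1 x)) := by
    rw [e1, X.castHom_castHom]
  rw [e2]
  have e3 : X.castHom (show (n-α.length)+1+α.length = n+1 by omega)
        (X.sComp ((n-α.length)+1) α (X.castHom hm1 x))
      = X.castHom (show (n-α.length)+α.length+1 = n+1 by omega)
          (X.castHom (show (n-α.length)+1+α.length = (n-α.length)+α.length+1 by omega)
            (X.sComp ((n-α.length)+1) α (X.castHom hm1 x))) := by
    rw [X.castHom_castHom]
  rw [e3, X.d_castHom (show (n-α.length)+α.length = n by omega)
    (show (n-α.length)+α.length+1 = n+1 by omega) k]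
  have hkey : X.d ((n-α.length)+α.length) k
        (X.castHom (show (n-α.length)+1+α.length = (n-α.length)+α.length+1 by omega)
          (X.sComp ((n-α.length)+1) α (X.castHom hm1 x)))
      = X.sComp (n-α.length) α (X.d (n-α.length) (k - α.length) (X.castHom hm1 x)) := by
    have base := X.d_sComp α (n-α.length) (k - α.length) hc
      (fun i hi => by have := hk i hi; omega) (by omega) (X.castHom hm1 x) (by omega)
    rw [show k - α.length + α.length = k from by omega] at base
    exact base
  rw [hkey]
  have hx'' : X.castHom hm1 x ∈ X.NG ((n-α.length)+1) := X.mem_NG_castHom hm1 x hx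
  have hd1 : X.d (n-α.length) (k - α.length) (X.castHom hm1 x) = 1 := by
    have hmem : X.castHom hm1 x ∈ ⨅ i ∈ Finset.range ((n-α.length)+1),
        (X.d (n-α.length) i).ker := hx''
    simp only [Subgroup.mem_iInf, Finset.mem_range, MonoidHom.mem_ker] at hmem
    exact hmem (k - α.length) (by omega)
  rw [hd1, map_one, map_one]

open scoped commutatorElement

/-- Lemma 3.1(ii). For disjoint `α, β ∈ S(n)` with `β < α`, and
`v = [s_α x, s_β y]`, if `k > i_l + 1` and `k > j_m + 1` (i.e. `k` exceeds by
more than one every index of `α` and of `β`; `i_l`, `j_m` are the largest),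
then `p_k(v) = v`. (Stated at level `n+1`; `k ≤ n` keeps `p_k` in range.) -/
theorem stmt8 (X : SGrp) (n : ℕ) (α β : List ℕ)
    (hα : SIdx (n+1) α) (hβ : SIdx (n+1) β)
    (hdisj : ∀ i ∈ α, i ∉ β) (hlt : Slt β α)
    (x : X.G (n+1 - α.length)) (y : X.G (n+1 - β.length))
    (hx : x ∈ X.NG (n+1 - α.length)) (hy : y ∈ X.NG (n+1 - β.length))
    (k : ℕ) (hkα : ∀ i ∈ α, i + 1 < k) (hkβ : ∀ j ∈ β, j + 1 < k)
    (hkn : k ≤ n) :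
    X.p n k ⁅X.sMapN (n+1) α x, X.sMapN (n+1) β y⁆ =
      ⁅X.sMapN (n+1) α x, X.sMapN (n+1) β y⁆ := by
  obtain ⟨i0, hi0⟩ := List.exists_mem_of_ne_nil α hα.1
  have hk2 : 2 ≤ k := by have := hkα i0 hi0; omega
  have hLk : α.length ≤ k - 1 :=
    chain'_length_le α hα.2.1 (k-1) (fun i hi => by have := hkα i hi; omega)
  have key : X.d n k (X.sMapN (n+1) α x) = 1 :=
    X.d_sMapN_eq_one α hα.2.1 n k hkα hkn hLk (by omega) x hx
  have hcomm : X.d n k ⁅X.sMapN (n+1) α x, X.sMapN (n+1) β y⁆ = 1 := by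
    rw [map_commutatorElement, key]
    simp [commutatorElement_def]
  rw [SGrp.p, hcomm, map_one, inv_one, mul_one]
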